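/- For every element w of the free group F_2 on two generators a, b, one has E(Pal(w)) = Pal(E(w)), where E is the automorphism of F_2 exchanging a and b. -/

import Mathlib

namespace PalWord

/-- The free group on two generators `a`, `b`. -/
abbrev F : Type := FreeGroup Bool

/-- The first generator `a` of the free group `F`. -/
def a : F := FreeGroup.of false

/-- The second generator `b` of the free group `F`. -/
def b : F := FreeGroup.of true

/-- The automorphism `R_a` of `F`, with `a ↦ a`, `b ↦ b a`. -/
def Ra : MulAut F :=
  MonoidHom.toMulEquiv
    (FreeGroup.lift (fun x => if x then b * a else a))
    (FreeGroup.lift (fun x => if x then b * a⁻¹ else a))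
    (by ext x; cases x <;> simp [a, b])
    (by ext x; cases x <;> simp [a, b])

/-- The automorphism `R_b` of `F`, with `a ↦ a b`, `b ↦ b`. -/
def Rb : MulAut F :=
  MonoidHom.toMulEquiv
    (FreeGroup.lift (fun x => if x then b else a * b))
    (FreeGroup.lift (fun x => if x then b else a * b⁻¹))
    (by ext x; cases x <;> simp [a, b])
    (by ext x; cases x <;> simp [a, b])

/-- The homomorphism `w ↦ R_w` from `F` to `Aut(F)`, sending `a` to `R_a` and `b` to `R_b`. -/
def R : F →* MulAut F := FreeGroup.lift (fun x => if x then Rb else Ra)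

/-- The palindromization map `Pal(w) = (a b)⁻¹ · R_w(a b)`. -/
def Pal (w : F) : F := (a * b)⁻¹ * R w (a * b)

/-- The automorphism `E` of `F` exchanging `a` and `b`. -/
def E : MulAut F :=
  MonoidHom.toMulEquiv
    (FreeGroup.lift (fun x => FreeGroup.of !x))
    (FreeGroup.lift (fun x => FreeGroup.of !x))
    (by ext x; cases x <;> simp)
    (by ext x; cases x <;> simp)

lemma E_of (x : Bool) : E (FreeGroup.of x) = FreeGroup.of !x := by
  simp [E, MonoidHom.toMulEquiv]

lemma E_a : E a = b := E_of false
lemma E_b : E b = a := E_of true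

lemma EE (x : F) : E (E x) = x := by
  have h : (E.toMonoidHom.comp E.toMonoidHom : F →* F) = MonoidHom.id F := by
    ext c
    cases c <;> simp [E_of]
  simpa using DFunLike.congr_fun h x

lemma Ra_a : Ra a = a := by simp [Ra, MonoidHom.toMulEquiv, a]
lemma Ra_b : Ra b = b * a := by simp [Ra, MonoidHom.toMulEquiv, b]
lemma Rb_a : Rb a = a * b := by simp [Rb, MonoidHom.toMulEquiv, a]
lemma Rb_b : Rb b = b := by simp [Rb, MonoidHom.toMulEquiv, b]

lemma R_a : R a = Ra := by simp [R, a]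
lemma R_b : R b = Rb := by simp [R, b]

lemma Rb_eq (x : F) : Rb x = E (Ra (E x)) := by
  have h : (Rb.toMonoidHom : F →* F)
      = E.toMonoidHom.comp (Ra.toMonoidHom.comp E.toMonoidHom) := by
    ext c
    cases c
    · show Rb a = E (Ra (E a))
      rw [E_a, Ra_b, map_mul, E_b, E_a, Rb_a]
    · show Rb b = E (Ra (E b))
      rw [E_b, Ra_a, E_a, Rb_b]
  simpa using DFunLike.congr_fun h x

lemma Ra_eq (x : F) : Ra x = E (Rb (E x)) := by
  rw [Rb_eq, EE, EE]

lemma key1 (w : F) : ∀ x, R (E w) x = E (R w (E x)) := by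
  induction w using FreeGroup.induction_on with
  | C1 => intro x; simp [EE]
  | of c =>
    intro x
    cases c
    · show R (E a) x = E (R a (E x))
      rw [E_a, R_a, R_b, Rb_eq]
    · show R (E b) x = E (R b (E x))
      rw [E_b, R_a, R_b, Ra_eq]
  | inv_of c ih =>
    intro x
    rw [map_inv E, map_inv R, map_inv R, MulAut.inv_def, MulAut.inv_def,
      MulEquiv.symm_apply_eq, ih, EE, MulEquiv.apply_symm_apply, EE]
  | mul u v ihu ihv =>
    intro x
    rw [map_mul, map_mul, map_mul, MulAut.mul_apply, MulAut.mul_apply,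
      ihv, ihu, EE]

lemma key2 (w : F) : R w (b * a * b⁻¹ * a⁻¹) = b * a * b⁻¹ * a⁻¹ := by
  induction w using FreeGroup.induction_on with
  | C1 => simp
  | of c =>
    cases c
    · show R a _ = _
      rw [R_a]
      simp only [map_mul, map_inv, Ra_a, Ra_b]
      group
    · show R b _ = _
      rw [R_b]
      simp only [map_mul, map_inv, Rb_a, Rb_b]
      group
  | inv_of c ih =>
    rw [map_inv, MulAut.inv_def, MulEquiv.symm_apply_eq, ih]
  | mul u v ihu ihv =>
    rw [map_mul R u v, MulAut.mul_apply, ihv, ihu]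

/-- The palindromization map commutes with the exchange automorphism `E`. -/
theorem E_Pal (w : F) : E (Pal w) = Pal (E w) := by
  unfold Pal
  rw [key1]
  have h1 : E (a * b) = b * a := by rw [map_mul, E_a, E_b]
  have hba : b * a = (b * a * b⁻¹ * a⁻¹) * (a * b) := by group
  rw [h1, hba]
  conv_rhs => rw [map_mul (R w), key2]
  simp only [map_mul, map_inv, mul_inv_rev, E_a, E_b]
  group

end PalWord
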